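/- Let m be a positive integer, let λ_1,…,λ_m be nonnegative reals with at least one λ_i > 0, and let a, b > 0. Define g : (0,∞) → ℝ by g(τ) = Σ_{i=1}^m λ_i(aτ² + bλ_i)/(λ_i + τ)². Then for every τ > 0 one has g(τ) ≥ g(b/a), with equality if and only if τ = b/a; that is, g attains its global minimum on (0,∞) uniquely at τ = b/a. -/
import Mathlib


noncomputable section

/-- The objective function of the deterministic ridge-tuning minimization:
`g(τ) = Σ_{i=1}^m λ_i (a τ² + b λ_i) / (λ_i + τ)²`. -/
def ridgeObjective (m : ℕ) (lam : Fin m → ℝ) (a b : ℝ) (τ : ℝ) : ℝ :=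
  ∑ i : Fin m, lam i * (a * τ ^ 2 + b * lam i) / (lam i + τ) ^ 2

lemma ridge_term_diff (lam τ a b : ℝ) (hlam : 0 ≤ lam) (hτ : 0 < τ)
    (ha : 0 < a) (hb : 0 < b) :
    lam * (a * τ ^ 2 + b * lam) / (lam + τ) ^ 2
      - lam * (a * (b / a) ^ 2 + b * lam) / (lam + b / a) ^ 2
      = (a * τ - b) ^ 2 * (lam ^ 2 / ((lam + τ) ^ 2 * (a * lam + b))) := by
  have h1 : lam + τ ≠ 0 := by positivity
  have h2 : a * lam + b ≠ 0 := by positivity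
  have h3 : lam + b / a ≠ 0 := by positivity
  have ha' : a ≠ 0 := ne_of_gt ha
  field_simp
  ring

/-- Let `m` be a positive integer, `λ_1,…,λ_m` nonnegative reals with at least one `λ_i > 0`,
and `a, b > 0`. Define `g(τ) = Σ_i λ_i (a τ² + b λ_i)/(λ_i + τ)²` on `(0,∞)`. Then for every
`τ > 0` one has `g(τ) ≥ g(b/a)`, with equality iff `τ = b/a`: `g` attains its global minimum
on `(0,∞)` uniquely at `τ = b/a`. -/
theorem stmt13 (m : ℕ) (hm : 0 < m) (lam : Fin m → ℝ) (hlam : ∀ i, 0 ≤ lam i)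
    (hex : ∃ i, 0 < lam i) (a b : ℝ) (ha : 0 < a) (hb : 0 < b) :
    ∀ τ : ℝ, 0 < τ →
      ridgeObjective m lam a b (b / a) ≤ ridgeObjective m lam a b τ ∧
        (ridgeObjective m lam a b τ = ridgeObjective m lam a b (b / a) ↔ τ = b / a) := by
  intro τ hτ
  set S : ℝ := ∑ i : Fin m, lam i ^ 2 / ((lam i + τ) ^ 2 * (a * lam i + b)) with hS
  have hdiff : ridgeObjective m lam a b τ - ridgeObjective m lam a b (b / a)
      = (a * τ - b) ^ 2 * S := by
    rw [ridgeObjective, ridgeObjective, ← Finset.sum_sub_distrib, hS, Finset.mul_sum]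
    exact Finset.sum_congr rfl fun i _ =>
      ridge_term_diff (lam i) τ a b (hlam i) hτ ha hb
  have hSpos : 0 < S := by
    obtain ⟨j, hj⟩ := hex
    have hterm : ∀ i : Fin m, 0 ≤ lam i ^ 2 / ((lam i + τ) ^ 2 * (a * lam i + b)) := by
      intro i
      have h1 := hlam i
      positivity
    have hjpos : 0 < lam j ^ 2 / ((lam j + τ) ^ 2 * (a * lam j + b)) := by positivity
    exact Finset.sum_pos' (fun i _ => hterm i) ⟨j, Finset.mem_univ j, hjpos⟩
  constructor
  · nlinarith [sq_nonneg (a * τ - b), mul_nonneg (sq_nonneg (a * τ - b)) hSpos.le]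
  · constructor
    · intro h
      have h0 : (a * τ - b) ^ 2 * S = 0 := by linarith [hdiff, h.symm ▸ hdiff]
      have : (a * τ - b) ^ 2 = 0 := by
        rcases mul_eq_zero.1 h0 with h' | h'
        · exact h'
        · exact absurd h' hSpos.ne'
      have : a * τ - b = 0 := by nlinarith
      field_simp
      linarith
    · intro h
      subst h
      rfl
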